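/- Suppose A ∈ R^{n×n} is semimonotone star and there exists x > 0 with Ax > 0 (value of the matrix game is positive, so A is a Q-matrix in the relevant sense). Then LCP(0, A) has only the trivial solution, i.e. A is an R₀-matrix. -/

import Mathlib

/-- A is semimonotone (E₀). -/
def IsSemimonotone {n : ℕ} (A : Matrix (Fin n) (Fin n) ℝ) : Prop :=
  ∀ x : Fin n → ℝ, 0 ≤ x → x ≠ 0 → ∃ i, 0 < x i ∧ 0 ≤ A.mulVec x i

/-- A is semimonotone star (E₀ˢ). -/
def IsSemimonotoneStar {n : ℕ} (A : Matrix (Fin n) (Fin n) ℝ) : Prop :=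
  IsSemimonotone A ∧
    ∀ x : Fin n → ℝ, 0 ≤ x → 0 ≤ A.mulVec x → dotProduct x (A.mulVec x) = 0 →
      A.transpose.mulVec x ≤ 0

theorem stmt17 {n : ℕ} (A : Matrix (Fin n) (Fin n) ℝ)
    (hA : IsSemimonotoneStar A)
    (hQ : ∃ x : Fin n → ℝ, (∀ i, 0 < x i) ∧ (∀ i, 0 < A.mulVec x i)) :
    ∀ z : Fin n → ℝ, 0 ≤ z → 0 ≤ A.mulVec z →
      dotProduct z (A.mulVec z) = 0 → z = 0 := by
  intro z hz hAz hdot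
  by_contra hne
  obtain ⟨y, hy, hAy⟩ := hQ
  have hT : A.transpose.mulVec z ≤ 0 := hA.2 z hz hAz hdot
  -- zᵀ(Ay) ≤ 0 since zᵀ(Ay) = (Aᵀz)ᵀ y
  have h1 : dotProduct z (A.mulVec y) ≤ 0 := by
    have : dotProduct z (A.mulVec y) =
        dotProduct (A.transpose.mulVec z) y := by
      rw [Matrix.dotProduct_mulVec, Matrix.mulVec_transpose]
    rw [this]
    apply Finset.sum_nonpos
    intro i _
    exact mul_nonpos_of_nonpos_of_nonneg (hT i) (hy i).le
  -- but zᵀ(Ay) > 0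
  obtain ⟨j, hj⟩ : ∃ j, 0 < z j := by
    by_contra h
    push_neg at h
    exact hne (funext fun i => le_antisymm (h i) (hz i))
  have h2 : 0 < dotProduct z (A.mulVec y) := by
    apply Finset.sum_pos' (fun i _ => mul_nonneg (hz i) (hAy i).le)
    exact ⟨j, Finset.mem_univ j, mul_pos hj (hAy j)⟩
  linarith
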